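/- Let (Γ, G, 𝓑) be a triple where Γ is G-symmetric, 𝓑 a G-partition with k = |Γ(B_i) ∩ B_j| ≥ 2 for adjacent blocks, and suppose G(B_i, B_j) acts transitively on the non-edges between X_{ji} = Γ(B_j) ∩ B_i and X_{ij} = Γ(B_i) ∩ B_j. Define the *-transform Γ* by joining x ∈ X_{ji} to exactly the vertices of X_{ij} not adjacent to x in Γ. Then Γ* is G-symmetric, 𝓑 is a G-partition for Γ* with the same quotient graph, the parameters satisfy v* = v, b* = b, k* = k, t* = k − t, and (Γ*)* = Γ. -/

import Mathlib

open scoped Pointwise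

def IsGSymmetric {V G : Type*} [Group G] [MulAction G V] (Γ : SimpleGraph V) : Prop :=
  (∀ (g : G) (x y : V), Γ.Adj x y → Γ.Adj (g • x) (g • y)) ∧
  (∀ x y : V, ∃ g : G, g • x = y) ∧
  (∀ x₁ y₁ x₂ y₂ : V, Γ.Adj x₁ y₁ → Γ.Adj x₂ y₂ → ∃ g : G, g • x₁ = x₂ ∧ g • y₁ = y₂)

def IsGPartition {V : Type*} (G : Type*) [Group G] [MulAction G V] (𝓑 : Set (Set V)) : Prop :=
  Setoid.IsPartition 𝓑 ∧ ∀ (g : G), ∀ B ∈ 𝓑, g • B ∈ 𝓑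

def BlockAdj {V : Type*} (Γ : SimpleGraph V) (B B' : Set V) : Prop :=
  B ≠ B' ∧ ∃ x ∈ B, ∃ y ∈ B', Γ.Adj x y


/-- The `*`-transform of `Γ` with respect to the partition `𝓑`: between two distinct blocks,
the vertices meeting the other block are rejoined by the complementary bipartite graph. -/
def starTransform {V : Type*} (Γ : SimpleGraph V) (𝓑 : Set (Set V)) : SimpleGraph V where
  Adj x y := x ≠ y ∧ ¬ Γ.Adj x y ∧
    ∃ B ∈ 𝓑, ∃ B' ∈ 𝓑, B ≠ B' ∧ x ∈ B ∧ y ∈ B' ∧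
      (∃ z ∈ B', Γ.Adj x z) ∧ (∃ w ∈ B, Γ.Adj y w)
  symm := ⟨by
    rintro x y ⟨hxy, hna, B, hB, B', hB', hne, hx, hy, h1, h2⟩
    exact ⟨hxy.symm, fun h => hna h.symm, B', hB', B, hB, hne.symm, hy, hx, h2, h1⟩⟩
  loopless := ⟨fun x h => h.1 rfl⟩

lemma block_unique' {V : Type*} {𝓑 : Set (Set V)} (hpart : Setoid.IsPartition 𝓑)
    {B C : Set V} (hB : B ∈ 𝓑) (hC : C ∈ 𝓑) {x : V} (hxB : x ∈ B) (hxC : x ∈ C) : B = C := by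
  obtain ⟨D, -, hun⟩ := hpart.2 x
  rw [hun B ⟨hB, hxB⟩, hun C ⟨hC, hxC⟩]

lemma starAdj_char' {V : Type*} {𝓑 : Set (Set V)} (hpart : Setoid.IsPartition 𝓑)
    (Γ : SimpleGraph V) {B B' : Set V} (hB : B ∈ 𝓑) (hB' : B' ∈ 𝓑) (hne : B ≠ B')
    {x y : V} (hx : x ∈ B) (hy : y ∈ B') :
    (starTransform Γ 𝓑).Adj x y ↔
      ¬ Γ.Adj x y ∧ (∃ z ∈ B', Γ.Adj x z) ∧ (∃ w ∈ B, Γ.Adj y w) := by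
  constructor
  · rintro ⟨hxy, hna, C, hC, C', hC', hCC, hxC, hyC, h1, h2⟩
    obtain rfl : C = B := block_unique' hpart hC hB hxC hx
    obtain rfl : C' = B' := block_unique' hpart hC' hB' hyC hy
    exact ⟨hna, h1, h2⟩
  · rintro ⟨hna, h1, h2⟩
    refine ⟨?_, hna, B, hB, B', hB', hne, hx, hy, h1, h2⟩
    rintro rfl; exact hne (block_unique' hpart hB hB' hx hy)

theorem stmt18 {V G : Type*} [Fintype V] [Group G] [MulAction G V]
    (Γ : SimpleGraph V) (𝓑 : Set (Set V))
    (hsym : IsGSymmetric (G := G) Γ) (hpart : IsGPartition G 𝓑)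
    (hintra : ∀ B ∈ 𝓑, ∀ x ∈ B, ∀ y ∈ B, ¬ Γ.Adj x y)
    (t k : ℕ) (htk : t < k) (hk2 : 2 ≤ k) (ht1 : 1 ≤ t)
    (ht : ∀ B ∈ 𝓑, ∀ B' ∈ 𝓑, BlockAdj Γ B B' → ∀ x ∈ B,
      (Γ.neighborSet x ∩ B').ncard = 0 ∨ (Γ.neighborSet x ∩ B').ncard = t)
    (hk : ∀ B ∈ 𝓑, ∀ B' ∈ 𝓑, BlockAdj Γ B B' →
      {x ∈ B | ∃ y ∈ B', Γ.Adj x y}.ncard = k)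
    -- G(B_i, B_j) is transitive on the non-edges between X_{ji} and X_{ij}
    (htransne : ∀ B ∈ 𝓑, ∀ B' ∈ 𝓑, BlockAdj Γ B B' →
      ∀ x ∈ B, ∀ y ∈ B', ∀ x' ∈ B, ∀ y' ∈ B',
        (∃ z ∈ B', Γ.Adj x z) → (∃ w ∈ B, Γ.Adj y w) →
        (∃ z ∈ B', Γ.Adj x' z) → (∃ w ∈ B, Γ.Adj y' w) →
        ¬ Γ.Adj x y → ¬ Γ.Adj x' y' →
        ∃ g : G, g • B = B ∧ g • B' = B' ∧ g • x = x' ∧ g • y = y') :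
    IsGSymmetric (G := G) (starTransform Γ 𝓑) ∧
    IsGPartition G 𝓑 ∧
    -- same quotient graph
    (∀ B ∈ 𝓑, ∀ B' ∈ 𝓑, (BlockAdj (starTransform Γ 𝓑) B B' ↔ BlockAdj Γ B B')) ∧
    -- k* = k : the same vertices of a block meet a fixed adjacent block
    (∀ B ∈ 𝓑, ∀ B' ∈ 𝓑, BlockAdj Γ B B' →
      {x ∈ B | ∃ y ∈ B', (starTransform Γ 𝓑).Adj x y}
        = {x ∈ B | ∃ y ∈ B', Γ.Adj x y}) ∧
    -- t* = k - t
    (∀ B ∈ 𝓑, ∀ B' ∈ 𝓑, BlockAdj Γ B B' → ∀ x ∈ B,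
      ((starTransform Γ 𝓑).neighborSet x ∩ B').ncard = 0 ∨
      ((starTransform Γ 𝓑).neighborSet x ∩ B').ncard = k - t) ∧
    -- (Γ*)* = Γ
    starTransform (starTransform Γ 𝓑) 𝓑 = Γ := by
  obtain ⟨hP, hGB⟩ := hpart
  have huniq : ∀ {B C : Set V}, B ∈ 𝓑 → C ∈ 𝓑 → ∀ {x : V}, x ∈ B → x ∈ C → B = C := by
    intro B C hB hC x hxB hxC
    exact block_unique' hP hB hC hxB hxC
  -- adjacency is preserved and reflected by group elements
  have hneA : ∀ (g : G) (x y : V), ¬ Γ.Adj x y → ¬ Γ.Adj (g • x) (g • y) := by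
    intro g x y h hadj
    exact h (by simpa [inv_smul_smul] using hsym.1 g⁻¹ _ _ hadj)
  have hsymmBA : ∀ {B B' : Set V}, BlockAdj Γ B B' → BlockAdj Γ B' B := by
    rintro B B' ⟨hne, x, hx, y, hy, hadj⟩
    exact ⟨hne.symm, y, hy, x, hx, hadj.symm⟩
  -- key existence: every vertex of X_{ji} has a non-neighbour in X_{ij}
  have hexists : ∀ B ∈ 𝓑, ∀ B' ∈ 𝓑, BlockAdj Γ B B' → ∀ x ∈ B,
      (∃ z ∈ B', Γ.Adj x z) →
      ∃ y ∈ B', (∃ w ∈ B, Γ.Adj y w) ∧ ¬ Γ.Adj x y := by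
    rintro B hB B' hB' hBA x hx ⟨z, hz, hxz⟩
    set X' := {y ∈ B' | ∃ w ∈ B, Γ.Adj y w} with hX'
    have hX'card : X'.ncard = k := hk B' hB' B hB (hsymmBA hBA)
    set N := Γ.neighborSet x ∩ B' with hN
    have hNcard : N.ncard = t := by
      rcases ht B hB B' hB' hBA x hx with h0 | h
      · exfalso
        have hzN : z ∈ N := ⟨hxz, hz⟩
        rw [(Set.ncard_eq_zero (Set.toFinite N)).mp h0] at hzN
        exact hzN
      · exact h
    have hNX : N ⊆ X' := by
      rintro y ⟨hyn, hyB'⟩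
      exact ⟨hyB', x, hx, (Γ.adj_symm hyn)⟩
    have : ¬ X' ⊆ N := by
      intro hsub
      have := Set.ncard_le_ncard hsub (Set.toFinite N)
      omega
    obtain ⟨y, hyX, hyN⟩ := Set.not_subset.mp this
    refine ⟨y, hyX.1, hyX.2, fun hadj => hyN ⟨hadj, hyX.1⟩⟩
  -- star neighbour existence
  have hstarex : ∀ B ∈ 𝓑, ∀ B' ∈ 𝓑, BlockAdj Γ B B' → ∀ x ∈ B,
      (∃ z ∈ B', Γ.Adj x z) → ∃ y ∈ B', (starTransform Γ 𝓑).Adj x y := by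
    intro B hB B' hB' hBA x hx hxz
    obtain ⟨y, hy, hw, hna⟩ := hexists B hB B' hB' hBA x hx hxz
    exact ⟨y, hy, (starAdj_char' hP Γ hB hB' hBA.1 hx hy).mpr ⟨hna, hxz, hw⟩⟩
  refine ⟨⟨?_, hsym.2.1, ?_⟩, ⟨hP, hGB⟩, ?_, ?_, ?_, ?_⟩
  · -- g preserves star adjacency
    rintro g x y ⟨hxy, hna, B, hB, B', hB', hne, hx, hy, ⟨z, hz, hxz⟩, ⟨w, hw, hyw⟩⟩
    refine ⟨fun h => hxy (MulAction.injective g h), hneA g x y hna,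
      g • B, hGB g B hB, g • B', hGB g B' hB', fun h => hne (MulAction.injective g h),
      Set.smul_mem_smul_set hx, Set.smul_mem_smul_set hy,
      ⟨g • z, Set.smul_mem_smul_set hz, hsym.1 g _ _ hxz⟩,
      ⟨g • w, Set.smul_mem_smul_set hw, hsym.1 g _ _ hyw⟩⟩
  · -- arc transitivity of the star transform
    rintro x₁ y₁ x₂ y₂ ⟨hxy₁, hna₁, B₁, hB₁, B₁', hB₁', hne₁, hx₁, hy₁, ⟨z₁, hz₁, hxz₁⟩, ⟨w₁, hw₁, hyw₁⟩⟩
      ⟨hxy₂, hna₂, B₂, hB₂, B₂', hB₂', hne₂, hx₂, hy₂, ⟨z₂, hz₂, hxz₂⟩, ⟨w₂, hw₂, hyw₂⟩⟩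
    obtain ⟨h, hhx, hhz⟩ := hsym.2.2 x₁ z₁ x₂ z₂ hxz₁ hxz₂
    have hB₁B₂ : h • B₁ = B₂ :=
      huniq (hGB h B₁ hB₁) hB₂ (hhx ▸ Set.smul_mem_smul_set hx₁) hx₂
    have hB₁'B₂' : h • B₁' = B₂' :=
      huniq (hGB h B₁' hB₁') hB₂' (hhz ▸ Set.smul_mem_smul_set hz₁) hz₂
    have hy' : h • y₁ ∈ B₂' := hB₁'B₂' ▸ Set.smul_mem_smul_set hy₁
    have hw' : h • w₁ ∈ B₂ := hB₁B₂ ▸ Set.smul_mem_smul_set hw₁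
    have hna' : ¬ Γ.Adj x₂ (h • y₁) := hhx ▸ hneA h x₁ y₁ hna₁
    obtain ⟨g, -, -, hg1, hg2⟩ := htransne B₂ hB₂ B₂' hB₂'
      ⟨hne₂, x₂, hx₂, z₂, hz₂, hxz₂⟩ x₂ hx₂ (h • y₁) hy' x₂ hx₂ y₂ hy₂
      ⟨z₂, hz₂, hxz₂⟩ ⟨h • w₁, hw', hsym.1 h y₁ w₁ hyw₁⟩
      ⟨z₂, hz₂, hxz₂⟩ ⟨w₂, hw₂, hyw₂⟩ hna' hna₂
    exact ⟨g * h, by rw [mul_smul, hhx, hg1], by rw [mul_smul]; exact hg2⟩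
  · -- same quotient graph
    intro B hB B' hB'
    constructor
    · rintro ⟨hne, x, hx, y, hy, hadj⟩
      obtain ⟨hna, ⟨z, hz, hxz⟩, -⟩ := (starAdj_char' hP Γ hB hB' hne hx hy).mp hadj
      exact ⟨hne, x, hx, z, hz, hxz⟩
    · rintro hBA
      obtain ⟨hne, x, hx, y, hy, hadj⟩ := hBA
      obtain ⟨y', hy', hadj'⟩ := hstarex B hB B' hB' ⟨hne, x, hx, y, hy, hadj⟩ x hx ⟨y, hy, hadj⟩
      exact ⟨hne, x, hx, y', hy', hadj'⟩
  · -- k* = k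
    intro B hB B' hB' hBA
    ext x
    simp only [Set.mem_setOf_eq]
    refine and_congr_right fun hx => ⟨?_, ?_⟩
    · rintro ⟨y, hy, hadj⟩
      exact (starAdj_char' hP Γ hB hB' hBA.1 hx hy).mp hadj |>.2.1
    · intro hxz
      exact hstarex B hB B' hB' hBA x hx hxz
  · -- t* = k - t
    intro B hB B' hB' hBA x hx
    rcases ht B hB B' hB' hBA x hx with h0 | hT
    · left
      have hNe : Γ.neighborSet x ∩ B' = ∅ := (Set.ncard_eq_zero (Set.toFinite _)).mp h0
      have : (starTransform Γ 𝓑).neighborSet x ∩ B' = ∅ := by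
        ext y
        simp only [Set.mem_inter_iff, SimpleGraph.mem_neighborSet, Set.mem_empty_iff_false,
          iff_false, not_and]
        intro hadj hy
        obtain ⟨-, ⟨z, hz, hxz⟩, -⟩ := (starAdj_char' hP Γ hB hB' hBA.1 hx hy).mp hadj
        have hzN : z ∈ Γ.neighborSet x ∩ B' := ⟨hxz, hz⟩
        rw [hNe] at hzN
        exact hzN
      rw [this]; simp
    · right
      set X' := {y ∈ B' | ∃ w ∈ B, Γ.Adj y w} with hX'
      set N := Γ.neighborSet x ∩ B' with hN
      have hNne : N.Nonempty := Set.nonempty_of_ncard_ne_zero (by omega)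
      obtain ⟨z₀, hz₀n, hz₀B⟩ := hNne
      have hNX : N ⊆ X' := by
        rintro y ⟨hyn, hyB'⟩
        exact ⟨hyB', x, hx, Γ.adj_symm hyn⟩
      have hset : (starTransform Γ 𝓑).neighborSet x ∩ B' = X' \ N := by
        ext y
        simp only [Set.mem_inter_iff, SimpleGraph.mem_neighborSet, Set.mem_diff]
        constructor
        · rintro ⟨hadj, hy⟩
          obtain ⟨hna, -, hw⟩ := (starAdj_char' hP Γ hB hB' hBA.1 hx hy).mp hadj
          exact ⟨⟨hy, hw⟩, fun hmem => hna hmem.1⟩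
        · rintro ⟨⟨hy, hw⟩, hyN⟩
          have hna : ¬ Γ.Adj x y := fun h => hyN ⟨h, hy⟩
          exact ⟨(starAdj_char' hP Γ hB hB' hBA.1 hx hy).mpr
            ⟨hna, ⟨z₀, hz₀B, hz₀n⟩, hw⟩, hy⟩
      rw [hset, Set.ncard_diff hNX (Set.toFinite N), hT,
        hk B' hB' B hB (hsymmBA hBA)]
  · -- (Γ*)* = Γ
    ext x y
    constructor
    · rintro ⟨hxy, hnS, B, hB, B', hB', hne, hx, hy, ⟨z, hz, hxz⟩, ⟨w, hw, hyw⟩⟩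
      obtain ⟨-, hz', -⟩ := (starAdj_char' hP Γ hB hB' hne hx hz).mp hxz
      obtain ⟨-, hw', -⟩ := (starAdj_char' hP Γ hB' hB hne.symm hy hw).mp hyw
      by_contra hnadj
      exact hnS ((starAdj_char' hP Γ hB hB' hne hx hy).mpr ⟨hnadj, hz', hw'⟩)
    · intro hadj
      obtain ⟨B, ⟨hB, hx⟩, -⟩ := hP.2 x
      obtain ⟨B', ⟨hB', hy⟩, -⟩ := hP.2 y
      have hne : B ≠ B' := by
        rintro rfl
        exact hintra B hB x hx y hy hadj
      have hBA : BlockAdj Γ B B' := ⟨hne, x, hx, y, hy, hadj⟩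
      obtain ⟨z, hz, hxz⟩ := hstarex B hB B' hB' hBA x hx ⟨y, hy, hadj⟩
      obtain ⟨w, hw, hyw⟩ := hstarex B' hB' B hB (hsymmBA hBA) y hy ⟨x, hx, hadj.symm⟩
      exact ⟨Γ.ne_of_adj hadj, fun h => h.2.1 hadj, B, hB, B', hB', hne, hx, hy,
        ⟨z, hz, hxz⟩, ⟨w, hw, hyw⟩⟩
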